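/- Let γ ≥ 0 and c ≥ max(2, γ+2) be real constants, and let n₁, n₂, n, u be positive integers with n₁ + n₂ + u = n and min(n₁, n₂) > u. Then n^γ + (n₁+u)^c + (n₂+u)^c < n^c. -/
import Mathlib


open Real

/-- Lemma 3.6: if `n₁ + n₂ + u = n`, `min n₁ n₂ > u`, `γ ≥ 0` and `c ≥ max 2 (γ+2)`,
then `n^γ + (n₁+u)^c + (n₂+u)^c < n^c`. -/
theorem almost_split_bound (γ c : ℝ) (hγ : 0 ≤ γ) (hc : max 2 (γ + 2) ≤ c)
    (n₁ n₂ n u : ℕ) (hn₁ : 0 < n₁) (hn₂ : 0 < n₂) (hn : 0 < n) (hu : 0 < u)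
    (hsum : n₁ + n₂ + u = n) (hmin : u < min n₁ n₂) :
    (n : ℝ) ^ γ + ((n₁ : ℝ) + u) ^ c + ((n₂ : ℝ) + u) ^ c < (n : ℝ) ^ c := by
  have h2c : (2 : ℝ) ≤ c := le_trans (le_max_left _ _) hc
  have hγc : γ ≤ c - 2 := by have := le_trans (le_max_right _ _) hc; linarith
  have hu1 : (1 : ℝ) ≤ u := by exact_mod_cast hu
  have hn1u : (u : ℝ) + 1 ≤ n₁ := by
    have : u + 1 ≤ n₁ := (lt_min_iff.mp hmin).1
    exact_mod_cast this
  have hn2u : (u : ℝ) + 1 ≤ n₂ := by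
    have : u + 1 ≤ n₂ := (lt_min_iff.mp hmin).2
    exact_mod_cast this
  have hsumR : (n₁ : ℝ) + n₂ + u = n := by exact_mod_cast hsum
  set A : ℝ := (n₁ : ℝ) + u with hA
  set B : ℝ := (n₂ : ℝ) + u with hB
  set N : ℝ := (n : ℝ) with hN
  have hA0 : 0 ≤ A := by positivity
  have hB0 : 0 ≤ B := by positivity
  have hN1 : 1 ≤ N := by
    simp only [hN]
    exact_mod_cast hn
  have hN0 : 0 < N := lt_of_lt_of_le one_pos hN1
  have hAN : A ≤ N := by simp only [hA, hN]; nlinarith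
  have hBN : B ≤ N := by simp only [hB, hN]; nlinarith
  have hc2 : 0 ≤ c - 2 := by linarith
  -- A^c ≤ A^2 * N^(c-2)
  have key : ∀ X : ℝ, 0 ≤ X → X ≤ N → X ^ c ≤ X ^ 2 * N ^ (c - 2) := by
    intro X hX0 hXN
    have : X ^ c = X ^ (2 : ℝ) * X ^ (c - 2) := by
      rw [← Real.rpow_add' hX0 (by linarith : (2 : ℝ) + (c - 2) ≠ 0)]
      norm_num
    rw [this, Real.rpow_two]
    gcongr
  have hAc := key A hA0 hAN
  have hBc := key B hB0 hBN
  have hNγ : N ^ γ ≤ N ^ (c - 2) := Real.rpow_le_rpow_of_exponent_le hN1 hγc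
  have hquad : 1 + A ^ 2 + B ^ 2 < N ^ 2 := by
    simp only [hA, hB, hN]
    nlinarith [mul_nonneg (by linarith : (0:ℝ) ≤ (n₁:ℝ) - u - 1) (by linarith : (0:ℝ) ≤ (n₂:ℝ) - u - 1)]
  have hNc2pos : 0 < N ^ (c - 2) := Real.rpow_pos_of_pos hN0 _
  have hfinal : N ^ γ + A ^ c + B ^ c < N ^ 2 * N ^ (c - 2) := by
    calc N ^ γ + A ^ c + B ^ c ≤ N ^ (c - 2) + A ^ 2 * N ^ (c - 2) + B ^ 2 * N ^ (c - 2) := by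
          gcongr
      _ = (1 + A ^ 2 + B ^ 2) * N ^ (c - 2) := by ring
      _ < N ^ 2 * N ^ (c - 2) := by exact mul_lt_mul_of_pos_right hquad hNc2pos
  have : N ^ 2 * N ^ (c - 2) = N ^ c := by
    rw [← Real.rpow_two, ← Real.rpow_add hN0]; ring_nf
  linarith [hfinal, this.le, this.ge]
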